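/- arXiv:2407.09390 — 2 statements merged into one kernel-verified Lean document; each statement's English description precedes it below -/
import Mathlib

section
/- Fix ε ∈ (0,1), τ > 0, ω > 0, and define the truncation ψ_τ(x) = sign(x)·min(|x|, τ) for x ∈ ℝ. Let X_1, …, X_n be random vectors in ℝ^p with max_{i∈[p]} max_{t∈[n]} E|X_{it}|^{2+2ε} ≤ ω^{2+2ε}. Let ψ_τ(X_t) denote the vector with entries ψ_τ(X_{it}), and define the p×p bias matrix B = (1/n)·Σ_{t=1}^n ( E[ψ_τ(X_t)·ψ_τ(X_t)ᵀ] − E[X_t·X_tᵀ] ). Then every entry of B satisfies |B_{ij}| ≤ 2·ω^{2+2ε}·τ^{−2ε}, and consequently the Frobenius norm satisfies ‖B‖_F ≤ 2·p·ω^{2+2ε}·τ^{−2ε}. -/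
open MeasureTheory

/-- Truncation operator: `ψ_τ(x) = sign(x) · min(|x|, τ)`. -/
noncomputable def trunc (τ x : ℝ) : ℝ := Real.sign x * min |x| τ

lemma sign_mul_abs' (x : ℝ) : Real.sign x * |x| = x := by
  rcases lt_trichotomy x 0 with h|h|h
  · rw [Real.sign_of_neg h, abs_of_neg h]; ring
  · simp [h]
  · rw [Real.sign_of_pos h, abs_of_pos h]; ring

lemma abs_sign_le (x : ℝ) : |Real.sign x| ≤ 1 := by
  rcases Real.sign_apply_eq x with h|h|h <;> simp [h]

lemma trunc_eq_clamp {τ : ℝ} (hτ : 0 ≤ τ) (x : ℝ) : trunc τ x = max (-τ) (min x τ) := by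
  unfold trunc
  rcases lt_trichotomy x 0 with h|h|h
  · rw [Real.sign_of_neg h, abs_of_neg h, min_eq_left (by linarith : x ≤ τ)]
    rcases le_total (-x) τ with h2|h2
    · rw [min_eq_left h2, max_eq_right (by linarith : -τ ≤ x)]; ring
    · rw [min_eq_right h2, max_eq_left (by linarith : x ≤ -τ)]; ring
  · subst h
    rw [Real.sign_zero, abs_zero, zero_mul,
      max_eq_right (le_min (neg_nonpos.2 hτ) (by linarith)), min_eq_left hτ]
  · rw [Real.sign_of_pos h, abs_of_pos h,
      max_eq_right (le_min (by linarith) (by linarith))]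
    ring

lemma abs_trunc_le {τ : ℝ} (hτ : 0 ≤ τ) (x : ℝ) : |trunc τ x| ≤ τ := by
  rw [trunc]
  rw [abs_mul, abs_of_nonneg (le_min (abs_nonneg x) hτ)]
  calc |Real.sign x| * min |x| τ ≤ 1 * τ :=
        mul_le_mul (abs_sign_le x) (min_le_right _ _) (le_min (abs_nonneg x) hτ) zero_le_one
    _ = τ := one_mul τ

lemma sub_min_le_aux {ε τ a : ℝ} (hε : 0 < ε) (hτ : 0 < τ) (ha : 0 ≤ a) :
    a - min a τ ≤ τ ^ (-(2*ε)) * a ^ (1 + 2*ε) := by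
  rcases le_or_gt a τ with h|h
  · rw [min_eq_left h]
    have : (0:ℝ) ≤ τ ^ (-(2*ε)) * a ^ (1 + 2*ε) := by positivity
    linarith
  · rw [min_eq_right h.le]
    have ha' : 0 < a := hτ.trans h
    have h1 : τ ^ (2*ε) ≤ a ^ (2*ε) := Real.rpow_le_rpow hτ.le h.le (by positivity)
    have h2 : a ^ (1 + 2*ε) = a * a ^ (2*ε) := by
      rw [Real.rpow_add ha', Real.rpow_one]
    have h3 : τ ^ (-(2*ε)) = (τ ^ (2*ε))⁻¹ := Real.rpow_neg hτ.le _
    have h4 : 0 < τ ^ (2*ε) := Real.rpow_pos_of_pos hτ _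
    rw [h2, h3]
    calc a - τ ≤ a := by linarith
      _ = (τ ^ (2*ε))⁻¹ * (a * τ ^ (2*ε)) := by field_simp
      _ ≤ (τ ^ (2*ε))⁻¹ * (a * a ^ (2*ε)) := by gcongr

lemma rearrange_aux {ε a b : ℝ} (hε : 0 < ε) (ha : 0 ≤ a) (hb : 0 ≤ b) :
    a ^ (1+2*ε) * b + a * b ^ (1+2*ε) ≤ a ^ (2+2*ε) + b ^ (2+2*ε) := by
  have key : ∀ c : ℝ, 0 ≤ c → c ^ (2+2*ε) = c * c ^ (1+2*ε) := by
    intro c hc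
    rcases eq_or_lt_of_le hc with h|h
    · rw [← h, Real.zero_rpow (by linarith), zero_mul]
    · rw [show (2+2*ε) = 1 + (1+2*ε) by ring, Real.rpow_add h, Real.rpow_one]
  rw [key a ha, key b hb]
  rcases le_total a b with h|h
  · have hp : a ^ (1+2*ε) ≤ b ^ (1+2*ε) := Real.rpow_le_rpow ha h (by linarith)
    nlinarith [mul_nonneg (sub_nonneg.2 h) (sub_nonneg.2 hp)]
  · have hp : b ^ (1+2*ε) ≤ a ^ (1+2*ε) := Real.rpow_le_rpow hb h (by linarith)
    nlinarith [mul_nonneg (sub_nonneg.2 h) (sub_nonneg.2 hp)]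

lemma trunc_pointwise {ε τ : ℝ} (hε : 0 < ε) (hτ : 0 < τ) (x y : ℝ) :
    |trunc τ x * trunc τ y - x * y| ≤ τ ^ (-(2*ε)) * (|x| ^ (2+2*ε) + |y| ^ (2+2*ε)) := by
  set a := |x| with hadef
  set b := |y| with hbdef
  have ha : 0 ≤ a := abs_nonneg x
  have hb : 0 ≤ b := abs_nonneg y
  have hxy : x * y = (Real.sign x * Real.sign y) * (a * b) := by
    conv_lhs => rw [← sign_mul_abs' x, ← sign_mul_abs' y]
    ring
  have htt : trunc τ x * trunc τ y = (Real.sign x * Real.sign y) * (min a τ * min b τ) := by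
    unfold trunc; ring
  have hmm : min a τ * min b τ ≤ a * b :=
    mul_le_mul (min_le_left _ _) (min_le_left _ _) (le_min hb hτ.le) ha
  have hs : |Real.sign x * Real.sign y| ≤ 1 := by
    rw [abs_mul]
    exact mul_le_one₀ (abs_sign_le x) (abs_nonneg _) (abs_sign_le y)
  have hτ' : 0 < τ ^ (-(2*ε)) := Real.rpow_pos_of_pos hτ _
  have key : a * b - min a τ * min b τ ≤ τ ^ (-(2*ε)) * (a ^ (2+2*ε) + b ^ (2+2*ε)) := by
    have h1 := sub_min_le_aux hε hτ ha
    have h2 := sub_min_le_aux hε hτ hb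
    have h3 := rearrange_aux hε ha hb
    have hma : min a τ ≤ a := min_le_left _ _
    have hmb : min b τ ≤ b := min_le_left _ _
    nlinarith [mul_le_mul_of_nonneg_right h1 hb,
      mul_le_mul_of_nonneg_left h2 ha,
      mul_le_mul_of_nonneg_left h3 hτ'.le,
      mul_le_mul_of_nonneg_right hma (sub_nonneg.2 hmb)]
  rw [htt, hxy, ← mul_sub, abs_mul]
  have habs : |min a τ * min b τ - a * b| = a * b - min a τ * min b τ := by
    rw [abs_sub_comm, abs_of_nonneg (sub_nonneg.2 hmm)]
  rw [habs]
  calc |Real.sign x * Real.sign y| * (a * b - min a τ * min b τ)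
      ≤ 1 * (a * b - min a τ * min b τ) :=
        mul_le_mul_of_nonneg_right hs (sub_nonneg.2 hmm)
    _ = a * b - min a τ * min b τ := one_mul _
    _ ≤ _ := key

lemma integral_bias_bound {Ω : Type*} [MeasurableSpace Ω] (μ : Measure Ω)
    [IsProbabilityMeasure μ] {ε τ ω : ℝ} (hε : 0 < ε) (hτ : 0 < τ)
    (f g : Ω → ℝ) (hf : Measurable f) (hg : Measurable g)
    (hif : Integrable (fun a => |f a| ^ (2+2*ε)) μ)
    (hig : Integrable (fun a => |g a| ^ (2+2*ε)) μ)
    (hip : Integrable (fun a => f a * g a) μ)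
    (hmf : ∫ a, |f a| ^ (2+2*ε) ∂μ ≤ ω ^ (2+2*ε))
    (hmg : ∫ a, |g a| ^ (2+2*ε) ∂μ ≤ ω ^ (2+2*ε)) :
    |(∫ a, trunc τ (f a) * trunc τ (g a) ∂μ) - ∫ a, f a * g a ∂μ|
      ≤ 2 * ω ^ (2+2*ε) * τ ^ (-(2*ε)) := by
  have hmt : ∀ (h : Ω → ℝ), Measurable h → Measurable (fun a => trunc τ (h a)) := by
    intro h hh
    simp only [trunc_eq_clamp hτ.le]
    exact measurable_const.max (hh.min measurable_const)
  have hitt : Integrable (fun a => trunc τ (f a) * trunc τ (g a)) μ := by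
    apply Integrable.mono' (integrable_const (τ * τ))
      (((hmt f hf).mul (hmt g hg)).aestronglyMeasurable)
    filter_upwards with a
    rw [Real.norm_eq_abs, Pi.mul_apply, abs_mul]
    exact mul_le_mul (abs_trunc_le hτ.le _) (abs_trunc_le hτ.le _) (abs_nonneg _) hτ.le
  rw [← integral_sub hitt hip]
  have hτ' : 0 < τ ^ (-(2*ε)) := Real.rpow_pos_of_pos hτ _
  calc |∫ a, (trunc τ (f a) * trunc τ (g a) - f a * g a) ∂μ|
      ≤ ∫ a, |trunc τ (f a) * trunc τ (g a) - f a * g a| ∂μ := by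
        simpa [Real.norm_eq_abs] using
          norm_integral_le_integral_norm (fun a => trunc τ (f a) * trunc τ (g a) - f a * g a) (μ := μ)
    _ ≤ ∫ a, τ ^ (-(2*ε)) * (|f a| ^ (2+2*ε) + |g a| ^ (2+2*ε)) ∂μ := by
        apply integral_mono (hitt.sub hip).abs ((hif.add hig).const_mul _)
        intro a
        exact trunc_pointwise hε hτ _ _
    _ = τ ^ (-(2*ε)) * ((∫ a, |f a| ^ (2+2*ε) ∂μ) + ∫ a, |g a| ^ (2+2*ε) ∂μ) := by
        rw [integral_const_mul, integral_add hif hig]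
    _ ≤ τ ^ (-(2*ε)) * (ω ^ (2+2*ε) + ω ^ (2+2*ε)) := by gcongr
    _ = 2 * ω ^ (2+2*ε) * τ ^ (-(2*ε)) := by ring

/-- Entrywise and Frobenius-norm bound on the bias of the truncated second-moment
matrix (the term `T_{1,ij}` in the proof of Proposition B.2): if
`max_{i,t} E|X_{it}|^{2+2ε} ≤ ω^{2+2ε}`, then the bias matrix
`B = (1/n) Σ_t (E[ψ_τ(X_t)ψ_τ(X_t)ᵀ] − E[X_t X_tᵀ])` satisfies
`|B_{ij}| ≤ 2 ω^{2+2ε} τ^{−2ε}` entrywise, so `‖B‖_F ≤ 2 p ω^{2+2ε} τ^{−2ε}`. -/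
theorem truncated_second_moment_matrix_bias
    {Ω : Type*} [MeasurableSpace Ω] (μ : Measure Ω) [IsProbabilityMeasure μ]
    {n p : ℕ} (hn : 0 < n)
    (ε τ ω : ℝ) (hε0 : 0 < ε) (hε1 : ε < 1) (hτ : 0 < τ) (hω : 0 < ω)
    (X : Fin n → Fin p → Ω → ℝ)
    (hmeas : ∀ t i, Measurable (X t i))
    (hint : ∀ t i, Integrable (fun a => |X t i a| ^ (2 + 2 * ε)) μ)
    (hintprod : ∀ t i j, Integrable (fun a => X t i a * X t j a) μ)
    (hmom : ∀ t i, ∫ a, |X t i a| ^ (2 + 2 * ε) ∂μ ≤ ω ^ (2 + 2 * ε))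
    (B : Matrix (Fin p) (Fin p) ℝ)
    (hB : ∀ i j, B i j = (1 / (n : ℝ)) * ∑ t : Fin n,
        ((∫ a, trunc τ (X t i a) * trunc τ (X t j a) ∂μ) - ∫ a, X t i a * X t j a ∂μ)) :
    (∀ i j, |B i j| ≤ 2 * ω ^ (2 + 2 * ε) * τ ^ (-(2 * ε)))
    ∧ Real.sqrt (∑ i : Fin p, ∑ j : Fin p, (B i j) ^ 2)
        ≤ 2 * (p : ℝ) * ω ^ (2 + 2 * ε) * τ ^ (-(2 * ε)) := by
  have hn' : (0:ℝ) < n := Nat.cast_pos.2 hn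
  set M := 2 * ω ^ (2 + 2 * ε) * τ ^ (-(2 * ε)) with hMdef
  have hM : 0 ≤ M := by positivity
  have hentry : ∀ i j, |B i j| ≤ M := by
    intro i j
    rw [hB i j, abs_mul, abs_of_nonneg (by positivity : (0:ℝ) ≤ 1 / (n:ℝ))]
    calc (1/(n:ℝ)) * |∑ t : Fin n, ((∫ a, trunc τ (X t i a) * trunc τ (X t j a) ∂μ)
            - ∫ a, X t i a * X t j a ∂μ)|
        ≤ (1/(n:ℝ)) * ∑ t : Fin n, |(∫ a, trunc τ (X t i a) * trunc τ (X t j a) ∂μ)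
            - ∫ a, X t i a * X t j a ∂μ| := by
          gcongr
          exact Finset.abs_sum_le_sum_abs _ _
      _ ≤ (1/(n:ℝ)) * ∑ _t : Fin n, M := by
          gcongr with t _
          exact integral_bias_bound μ hε0 hτ (X t i) (X t j) (hmeas t i) (hmeas t j)
            (hint t i) (hint t j) (hintprod t i j) (hmom t i) (hmom t j)
      _ = M := by
          rw [Finset.sum_const, Finset.card_univ, Fintype.card_fin, nsmul_eq_mul]
          field_simp
  refine ⟨hentry, ?_⟩
  have hsum : (∑ i : Fin p, ∑ j : Fin p, (B i j) ^ 2) ≤ ((p:ℝ) * M) ^ 2 := by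
    calc (∑ i : Fin p, ∑ j : Fin p, (B i j) ^ 2)
        ≤ ∑ _i : Fin p, ∑ _j : Fin p, M ^ 2 := by
          apply Finset.sum_le_sum
          intro i _
          apply Finset.sum_le_sum
          intro j _
          have h := abs_le.mp (hentry i j)
          nlinarith [h.1, h.2]
      _ = ((p:ℝ) * M) ^ 2 := by
          simp [Finset.sum_const, Finset.card_univ]
          ring
  calc Real.sqrt (∑ i : Fin p, ∑ j : Fin p, (B i j) ^ 2)
      ≤ Real.sqrt (((p:ℝ) * M) ^ 2) := Real.sqrt_le_sqrt hsum
    _ = (p:ℝ) * M := Real.sqrt_sq (by positivity)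
    _ = 2 * (p : ℝ) * ω ^ (2 + 2 * ε) * τ ^ (-(2 * ε)) := by rw [hMdef]; ring
end

section
/- Let A_t ∈ ℝ^{m×q} for t = 1, …, n be a sequence of matrices with entries a_{ij,t}, let B ∈ ℝ^{q×s} be a matrix, and let C_t ∈ ℝ^{s×u} for t = 1, …, n be a sequence of matrices. Then ‖ Σ_{t=1}^n A_t B C_t ‖_F² ≤ ( Σ_{i=1}^m Σ_{j=1}^q ‖ Σ_{t=1}^n a_{ij,t} C_t ‖_F² ) · ‖B‖_F². -/
/-- Lemma B.13: for matrices `A_t ∈ ℝ^{m×q}`, `B ∈ ℝ^{q×s}`, `C_t ∈ ℝ^{s×u}`,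
`‖Σ_t A_t B C_t‖_F² ≤ (Σ_{i,j} ‖Σ_t a_{ij,t} C_t‖_F²) · ‖B‖_F²`. -/
theorem frobenius_sum_product_bound
    {n m q s u : ℕ}
    (A : Fin n → Matrix (Fin m) (Fin q) ℝ)
    (B : Matrix (Fin q) (Fin s) ℝ)
    (C : Fin n → Matrix (Fin s) (Fin u) ℝ) :
    (∑ i : Fin m, ∑ k : Fin u, ((∑ t : Fin n, A t * B * C t) i k) ^ 2)
      ≤ (∑ i : Fin m, ∑ j : Fin q,
          ∑ l : Fin s, ∑ k : Fin u, ((∑ t : Fin n, A t i j • C t) l k) ^ 2) *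
        ∑ j : Fin q, ∑ l : Fin s, (B j l) ^ 2 := by
  have swap3 : ∀ {α β γ : Type} [Fintype α] [Fintype β] [Fintype γ]
      (F : α → β → γ → ℝ),
      (∑ a : α, ∑ b : β, ∑ c : γ, F a b c)
        = ∑ b : β, ∑ c : γ, ∑ a : α, F a b c := by
    intro α β γ _ _ _ F
    rw [Finset.sum_comm]
    exact Finset.sum_congr rfl fun b _ => Finset.sum_comm
  set D : Fin m → Fin q → Fin s → Fin u → ℝ :=
    fun i j l k => ∑ t : Fin n, A t i j * C t l k with hD
  have hentry : ∀ i k, (∑ t : Fin n, A t * B * C t) i k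
      = ∑ p : Fin q × Fin s, D i p.1 p.2 k * B p.1 p.2 := by
    intro i k
    rw [Fintype.sum_prod_type]
    simp only [Matrix.sum_apply, Matrix.mul_apply, hD, Finset.sum_mul,
      Finset.mul_sum]
    rw [swap3 (fun t l j => A t i j * B j l * C t l k), Finset.sum_comm]
    exact Finset.sum_congr rfl fun j _ => Finset.sum_congr rfl fun l _ =>
      Finset.sum_congr rfl fun t _ => by ring
  have key : ∀ i k, ((∑ t : Fin n, A t * B * C t) i k) ^ 2
      ≤ (∑ p : Fin q × Fin s, (D i p.1 p.2 k) ^ 2) *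
        (∑ p : Fin q × Fin s, (B p.1 p.2) ^ 2) := by
    intro i k
    rw [hentry i k]
    exact Finset.sum_mul_sq_le_sq_mul_sq _ _ _
  calc (∑ i : Fin m, ∑ k : Fin u, ((∑ t : Fin n, A t * B * C t) i k) ^ 2)
      ≤ ∑ i : Fin m, ∑ k : Fin u,
          (∑ p : Fin q × Fin s, (D i p.1 p.2 k) ^ 2) *
          (∑ p : Fin q × Fin s, (B p.1 p.2) ^ 2) := by
        refine Finset.sum_le_sum fun i _ => Finset.sum_le_sum fun k _ => key i k
    _ = (∑ i : Fin m, ∑ j : Fin q,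
          ∑ l : Fin s, ∑ k : Fin u, ((∑ t : Fin n, A t i j • C t) l k) ^ 2) *
        ∑ j : Fin q, ∑ l : Fin s, (B j l) ^ 2 := by
        simp only [Matrix.sum_apply, Matrix.smul_apply, smul_eq_mul,
          Fintype.sum_prod_type, ← Finset.sum_mul, hD]
        congr 1
        refine Finset.sum_congr rfl fun i _ => ?_
        exact swap3 (fun k j l => (∑ t, A t i j * C t l k) ^ 2)
end
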